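/- Two words u, v over {1,2,3} induce the same map on all of ℕ^3 under the row-insertion action if and only if they have the same length and their induced maps agree on the finite box {(x1,x2,x3) ∈ ℕ^3 : 0 ≤ x_i ≤ max(|u|,|v|)+1}. -/

import Mathlib

/-- Action of a letter of `{1,2,3}` (encoded as `Fin 3`) on a row identified
with its multiplicity vector `(x₁,x₂,x₃) ∈ ℕ³`. -/
def act3 (x : ℕ × ℕ × ℕ) (j : Fin 3) : ℕ × ℕ × ℕ :=
  if j = 0 then
    if 0 < x.2.1 then (x.1 + 1, x.2.1 - 1, x.2.2)
    else if 0 < x.2.2 then (x.1 + 1, x.2.1, x.2.2 - 1)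
    else (x.1 + 1, x.2.1, x.2.2)
  else if j = 1 then (x.1, x.2.1 + 1, x.2.2 - 1)
  else (x.1, x.2.1, x.2.2 + 1)

/-- Action of a word, composing letter actions from left to right. -/
def actW3 (x : ℕ × ℕ × ℕ) (w : List (Fin 3)) : ℕ × ℕ × ℕ :=
  w.foldl act3 x

/-- two words act identically on all of `ℕ³` iff they have the
same length and act identically on the box of side `max(|u|,|v|)+1`. -/
lemma fin3_cases (j : Fin 3) : j = 0 ∨ j = 1 ∨ j = 2 := by
  fin_cases j <;> simp

lemma actW3_cons (x : ℕ × ℕ × ℕ) (j : Fin 3) (w : List (Fin 3)) :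
    actW3 x (j :: w) = actW3 (act3 x j) w := rfl

lemma count_sum3 (w : List (Fin 3)) :
    w.length = w.count 0 + w.count 1 + w.count 2 := by
  induction w with
  | nil => simp
  | cons j w ih =>
    rcases fin3_cases j with rfl | rfl | rfl <;> simp [List.count_cons, ih] <;> omega

lemma actW3_big (w : List (Fin 3)) : ∀ (x1 a b : ℕ),
    actW3 (x1, w.length + a, w.length + b) w =
      (x1 + w.count 0, w.length + a + w.count 1 - w.count 0,
        w.length + b + w.count 2 - w.count 1) := by
  induction w with
  | nil => intro x1 a b; simp [actW3]
  | cons j w ih =>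
    intro x1 a b
    have hcle0 := List.count_le_length (a := (0 : Fin 3)) (l := w)
    have hcle1 := List.count_le_length (a := (1 : Fin 3)) (l := w)
    rw [actW3_cons]
    simp only [List.length_cons]
    rcases fin3_cases j with rfl | rfl | rfl
    · have e : act3 (x1, (w.length + 1) + a, (w.length + 1) + b) 0
          = (x1 + 1, w.length + a, w.length + (b + 1)) := by
        simp [act3]; omega
      rw [e, ih]
      simp [List.count_cons, Prod.ext_iff]
      omega
    · have e : act3 (x1, (w.length + 1) + a, (w.length + 1) + b) 1
          = (x1, w.length + (a + 2), w.length + b) := by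
        simp [act3]; omega
      rw [e, ih]
      simp [List.count_cons, Prod.ext_iff]
      omega
    · have e : act3 (x1, (w.length + 1) + a, (w.length + 1) + b) 2
          = (x1, w.length + (a + 1), w.length + (b + 2)) := by
        simp [act3]; omega
      rw [e, ih]
      simp [List.count_cons, Prod.ext_iff]
      omega

lemma actW3_shift1 (w : List (Fin 3)) : ∀ (x1 x2 x3 : ℕ),
    actW3 (x1 + 1, x2, x3) w =
      ((actW3 (x1, x2, x3) w).1 + 1, (actW3 (x1, x2, x3) w).2) := by
  induction w with
  | nil => intros; rfl
  | cons j w ih =>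
    intro x1 x2 x3
    rw [actW3_cons, actW3_cons]
    rcases fin3_cases j with rfl | rfl | rfl
    · by_cases h2 : 0 < x2
      · have e1 : act3 (x1 + 1, x2, x3) 0 = (x1 + 1 + 1, x2 - 1, x3) := by simp [act3, h2]
        have e2 : act3 (x1, x2, x3) 0 = (x1 + 1, x2 - 1, x3) := by simp [act3, h2]
        rw [e1, e2, ih]
      · by_cases h3 : 0 < x3
        · have e1 : act3 (x1 + 1, x2, x3) 0 = (x1 + 1 + 1, x2, x3 - 1) := by
            simp [act3, h2, h3]
          have e2 : act3 (x1, x2, x3) 0 = (x1 + 1, x2, x3 - 1) := by simp [act3, h2, h3]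
          rw [e1, e2, ih]
        · have e1 : act3 (x1 + 1, x2, x3) 0 = (x1 + 1 + 1, x2, x3) := by simp [act3, h2, h3]
          have e2 : act3 (x1, x2, x3) 0 = (x1 + 1, x2, x3) := by simp [act3, h2, h3]
          rw [e1, e2, ih]
    · have e1 : act3 (x1 + 1, x2, x3) 1 = (x1 + 1, x2 + 1, x3 - 1) := by simp [act3]
      have e2 : act3 (x1, x2, x3) 1 = (x1, x2 + 1, x3 - 1) := by simp [act3]
      rw [e1, e2, ih]
    · have e1 : act3 (x1 + 1, x2, x3) 2 = (x1 + 1, x2, x3 + 1) := by simp [act3]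
      have e2 : act3 (x1, x2, x3) 2 = (x1, x2, x3 + 1) := by simp [act3]
      rw [e1, e2, ih]

lemma actW3_shift2 (w : List (Fin 3)) : ∀ (x1 x2 x3 : ℕ), w.length ≤ x2 →
    actW3 (x1, x2 + 1, x3) w =
      ((actW3 (x1, x2, x3) w).1, (actW3 (x1, x2, x3) w).2.1 + 1,
        (actW3 (x1, x2, x3) w).2.2) := by
  induction w with
  | nil => intros; rfl
  | cons j w ih =>
    intro x1 x2 x3 hlen
    simp only [List.length_cons] at hlen
    rw [actW3_cons, actW3_cons]
    rcases fin3_cases j with rfl | rfl | rfl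
    · have h2 : 0 < x2 := by omega
      have e1 : act3 (x1, x2 + 1, x3) 0 = (x1 + 1, (x2 - 1) + 1, x3) := by
        simp [act3]; omega
      have e2 : act3 (x1, x2, x3) 0 = (x1 + 1, x2 - 1, x3) := by simp [act3, h2]
      rw [e1, e2, ih _ _ _ (by omega)]
    · have e1 : act3 (x1, x2 + 1, x3) 1 = (x1, (x2 + 1) + 1, x3 - 1) := by simp [act3]
      have e2 : act3 (x1, x2, x3) 1 = (x1, x2 + 1, x3 - 1) := by simp [act3]
      rw [e1, e2, ih _ _ _ (by omega)]
    · have e1 : act3 (x1, x2 + 1, x3) 2 = (x1, x2 + 1, x3 + 1) := by simp [act3]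
      have e2 : act3 (x1, x2, x3) 2 = (x1, x2, x3 + 1) := by simp [act3]
      rw [e1, e2, ih _ _ _ (by omega)]

lemma actW3_shift3 (w : List (Fin 3)) : ∀ (x1 x2 x3 : ℕ), w.length ≤ x3 →
    actW3 (x1, x2, x3 + 1) w =
      ((actW3 (x1, x2, x3) w).1, (actW3 (x1, x2, x3) w).2.1,
        (actW3 (x1, x2, x3) w).2.2 + 1) := by
  induction w with
  | nil => intros; rfl
  | cons j w ih =>
    intro x1 x2 x3 hlen
    simp only [List.length_cons] at hlen
    have h3 : 0 < x3 := by omega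
    rw [actW3_cons, actW3_cons]
    rcases fin3_cases j with rfl | rfl | rfl
    · by_cases h2 : 0 < x2
      · have e1 : act3 (x1, x2, x3 + 1) 0 = (x1 + 1, x2 - 1, x3 + 1) := by simp [act3, h2]
        have e2 : act3 (x1, x2, x3) 0 = (x1 + 1, x2 - 1, x3) := by simp [act3, h2]
        rw [e1, e2, ih _ _ _ (by omega)]
      · have e1 : act3 (x1, x2, x3 + 1) 0 = (x1 + 1, x2, (x3 - 1) + 1) := by
          simp [act3, h2]; omega
        have e2 : act3 (x1, x2, x3) 0 = (x1 + 1, x2, x3 - 1) := by simp [act3, h2, h3]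
        rw [e1, e2, ih _ _ _ (by omega)]
    · have e1 : act3 (x1, x2, x3 + 1) 1 = (x1, x2 + 1, (x3 - 1) + 1) := by
        simp [act3]; omega
      have e2 : act3 (x1, x2, x3) 1 = (x1, x2 + 1, x3 - 1) := by simp [act3]
      rw [e1, e2, ih _ _ _ (by omega)]
    · have e1 : act3 (x1, x2, x3 + 1) 2 = (x1, x2, (x3 + 1) + 1) := by simp [act3]
      have e2 : act3 (x1, x2, x3) 2 = (x1, x2, x3 + 1) := by simp [act3]
      rw [e1, e2, ih _ _ _ (by omega)]

theorem gram_iff_agree_on_box (u v : List (Fin 3)) :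
    (∀ x : ℕ × ℕ × ℕ, actW3 x u = actW3 x v) ↔
      (u.length = v.length ∧
        ∀ x : ℕ × ℕ × ℕ,
          x.1 ≤ max u.length v.length + 1 →
          x.2.1 ≤ max u.length v.length + 1 →
          x.2.2 ≤ max u.length v.length + 1 →
          actW3 x u = actW3 x v) := by
  constructor
  · intro h
    refine ⟨?_, fun x _ _ _ => h x⟩
    have hb := h (0, u.length + v.length, u.length + v.length)
    rw [actW3_big u 0 v.length v.length] at hb
    rw [show u.length + v.length = v.length + u.length by omega,
      actW3_big v 0 u.length u.length] at hb
    have h0u := List.count_le_length (a := (0 : Fin 3)) (l := u)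
    have h1u := List.count_le_length (a := (1 : Fin 3)) (l := u)
    have h0v := List.count_le_length (a := (0 : Fin 3)) (l := v)
    have h1v := List.count_le_length (a := (1 : Fin 3)) (l := v)
    have hsu := count_sum3 u
    have hsv := count_sum3 v
    rw [Prod.ext_iff, Prod.ext_iff] at hb
    obtain ⟨e1, e2, e3⟩ := hb
    simp only at e1 e2 e3
    omega
  · rintro ⟨hlen, hbox⟩
    set n := max u.length v.length with hn
    have hun : u.length ≤ n := le_max_left _ _
    have hvn : v.length ≤ n := le_max_right _ _
    have main : ∀ N : ℕ, ∀ x : ℕ × ℕ × ℕ, x.1 + x.2.1 + x.2.2 ≤ N →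
        actW3 x u = actW3 x v := by
      intro N
      induction N with
      | zero =>
        rintro ⟨a, b, c⟩ h
        exact hbox (a, b, c) (by omega) (by omega) (by omega)
      | succ N ih =>
        rintro ⟨a, b, c⟩ h
        by_cases hb : b ≤ n + 1
        · by_cases hc : c ≤ n + 1
          · by_cases ha : a ≤ n + 1
            · exact hbox (a, b, c) ha hb hc
            · obtain ⟨k, rfl⟩ : ∃ k, a = k + 1 := ⟨a - 1, by omega⟩
              rw [actW3_shift1 u k b c, actW3_shift1 v k b c,
                ih (k, b, c) (by simp at h ⊢; omega)]
          · obtain ⟨k, rfl⟩ : ∃ k, c = k + 1 := ⟨c - 1, by omega⟩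
            rw [actW3_shift3 u a b k (by omega), actW3_shift3 v a b k (by omega),
              ih (a, b, k) (by simp at h ⊢; omega)]
        · obtain ⟨k, rfl⟩ : ∃ k, b = k + 1 := ⟨b - 1, by omega⟩
          rw [actW3_shift2 u a k c (by omega), actW3_shift2 v a k c (by omega),
            ih (a, k, c) (by simp at h ⊢; omega)]
    intro x
    exact main (x.1 + x.2.1 + x.2.2) x le_rfl
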